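/- For every positive integer n and every z_1,...,z_n on the unit circle, one has ∫_{−1}^{1} |x·g_n(x)| dx > 1/192, where g_n(x) = ∑_{k=1}^n 1/(x−z_k). In particular ∫_{−1}^{1} |g_n(x)| dx > 1/192. -/

import Mathlib

open MeasureTheory Set

set_option maxHeartbeats 1000000

private lemma normSq_one_sub_eq (z : ℂ) (hz : ‖z‖ = 1) :
    Complex.normSq (1 - z) = 2 - 2*z.re := by
  have h1 : Complex.normSq z = 1 := by
    rw [← Complex.sq_norm, hz]; norm_num
  rw [Complex.normSq_apply] at h1 ⊢
  simp only [Complex.sub_re, Complex.sub_im, Complex.one_re, Complex.one_im]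
  linarith

private lemma normSq_sub_eq (x : ℝ) (z : ℂ) (hz : ‖z‖ = 1) :
    Complex.normSq ((x:ℂ) - z) = (1-x)^2 + x * Complex.normSq (1 - z) := by
  have h1 : Complex.normSq z = 1 := by
    rw [← Complex.sq_norm, hz]; norm_num
  rw [Complex.normSq_apply] at h1
  rw [Complex.normSq_apply, Complex.normSq_apply]
  simp only [Complex.sub_re, Complex.sub_im, Complex.ofReal_re, Complex.ofReal_im,
    Complex.one_re, Complex.one_im]
  linear_combination (1-x)*h1

private lemma re_sum_eq (n : ℕ) (z : Fin n → ℂ) (x : ℝ) :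
    ((x:ℂ) * ∑ k, 1 / ((x:ℂ) - z k)).re
      = ∑ k, x * (x - (z k).re) / Complex.normSq ((x:ℂ) - z k) := by
  rw [Finset.mul_sum, Complex.re_sum]
  refine Finset.sum_congr rfl fun k _ => ?_
  rw [one_div, Complex.re_ofReal_mul, Complex.inv_re]
  have : ((x:ℂ) - z k).re = x - (z k).re := by simp
  rw [this, mul_div_assoc]

private lemma term_eq (x q m : ℝ) (hm : m ≠ 0) (hmd : m = (1-x)^2 + x*q) :
    x * (x - (1 - q/2)) / m = 1/2 - (1 - x^2)/(2*m) := by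
  field_simp
  rw [hmd]; ring

private lemma key_lower (f φ : ℝ → ℝ) (α β : ℝ) (hαβ : α ≤ β)
    (hsub : Icc α β ⊆ Icc (-1:ℝ) 1)
    (hφc : ContinuousOn φ (Icc α β))
    (h0 : ∀ x ∈ Icc α β, 0 ≤ φ x)
    (hle : ∀ x ∈ Icc α β, φ x ≤ f x)
    (hval : 1/192 < ∫ x in α..β, φ x) :
    ENNReal.ofReal (1/192) < ∫⁻ x in Icc (-1:ℝ) 1, ENNReal.ofReal (f x) := by
  have hint : IntegrableOn φ (Icc α β) := hφc.integrableOn_Icc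
  have h1 : ENNReal.ofReal (∫ x in Icc α β, φ x) = ∫⁻ x in Icc α β, ENNReal.ofReal (φ x) := by
    refine MeasureTheory.ofReal_integral_eq_lintegral_ofReal hint ?_
    exact (ae_restrict_iff' measurableSet_Icc).2 (ae_of_all _ h0)
  have h2 : (1:ℝ)/192 < ∫ x in Icc α β, φ x := by
    rwa [MeasureTheory.integral_Icc_eq_integral_Ioc, ← intervalIntegral.integral_of_le hαβ]
  calc ENNReal.ofReal (1/192) < ENNReal.ofReal (∫ x in Icc α β, φ x) := by
        exact (ENNReal.ofReal_lt_ofReal_iff_of_nonneg (by norm_num)).2 h2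
    _ = ∫⁻ x in Icc α β, ENNReal.ofReal (φ x) := h1
    _ ≤ ∫⁻ x in Icc α β, ENNReal.ofReal (f x) := by
        refine lintegral_mono_ae ?_
        exact (ae_restrict_iff' measurableSet_Icc).2
          (ae_of_all _ fun x hx => ENNReal.ofReal_le_ofReal (hle x hx))
    _ ≤ ∫⁻ x in Icc (-1:ℝ) 1, ENNReal.ofReal (f x) := lintegral_mono_set hsub

private lemma intA (N : ℝ) (hN : 1 ≤ N) :
    ∫ x in (1 - 1/(2*N))..(1 - 1/(4*N)), ((3/8)*(1-x)⁻¹ - N/2) = (3/8)*Real.log 2 - 1/8 := by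
  have hN0 : (0:ℝ) < N := lt_of_lt_of_le one_pos hN
  have ha : (0:ℝ) < 1/(4*N) := by positivity
  have hle : 1 - 1/(2*N) ≤ 1 - 1/(4*N) := by
    have : 1/(4*N) ≤ 1/(2*N) := by
      apply one_div_le_one_div_of_le (by positivity)
      linarith
    linarith
  have hpos : ∀ x ∈ Set.uIcc (1 - 1/(2*N)) (1 - 1/(4*N)), 0 < 1 - x := by
    intro x hx
    rw [Set.uIcc_of_le hle] at hx
    have : x ≤ 1 - 1/(4*N) := hx.2
    linarith
  have key : ∀ x ∈ Set.uIcc (1 - 1/(2*N)) (1 - 1/(4*N)),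
      HasDerivAt (fun y => -(3/8)*Real.log (1-y) - (N/2)*y) ((3/8)*(1-x)⁻¹ - N/2) x := by
    intro x hx
    have hp := hpos x hx
    have h1 : HasDerivAt (fun y : ℝ => 1 - y) (-1) x := by
      simpa using (hasDerivAt_id x).const_sub 1
    have h2 : HasDerivAt (fun y : ℝ => Real.log (1 - y)) ((1-x)⁻¹ * (-1)) x :=
      (Real.hasDerivAt_log (ne_of_gt hp)).comp x h1
    have h3 := (h2.const_mul (-(3/8):ℝ)).sub (hasDerivAt_id' x |>.const_mul (N/2))
    exact h3.congr_deriv (by ring)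
  have hcont : ContinuousOn (fun x : ℝ => (3/8)*(1-x)⁻¹ - N/2)
      (Set.uIcc (1 - 1/(2*N)) (1 - 1/(4*N))) := by
    refine ContinuousOn.sub ?_ continuousOn_const
    refine continuousOn_const.mul (ContinuousOn.inv₀ (by fun_prop) ?_)
    exact fun x hx => ne_of_gt (hpos x hx)
  rw [intervalIntegral.integral_eq_sub_of_hasDerivAt key (hcont.intervalIntegrable)]
  have e1 : 1 - (1 - 1/(4*N)) = 1/(4*N) := by ring
  have e2 : 1 - (1 - 1/(2*N)) = 2 * (1/(4*N)) := by ring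
  simp only [e1, e2]
  rw [Real.log_mul two_ne_zero (ne_of_gt ha)]
  field_simp
  ring

private lemma intC (N V T : ℝ) :
    ∫ x in (1-T)..1, (N/2 - (2/3)*V*(1-x^2)) = N*T/2 - (2/3)*V*(T^2 - T^3/3) := by
  have key : ∀ x ∈ Set.uIcc (1-T) (1:ℝ),
      HasDerivAt (fun y => (N/2)*y - (2/3)*V*(y - y^3/3)) (N/2 - (2/3)*V*(1-x^2)) x := by
    intro x _
    have h1 : HasDerivAt (fun y : ℝ => y - y^3/3) (1 - x^2) x := by
      have := (hasDerivAt_id' x).sub ((hasDerivAt_pow 3 x).div_const 3)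
      exact this.congr_deriv (by push_cast; ring)
    have h3 := ((hasDerivAt_id' x).const_mul (N/2)).sub (h1.const_mul ((2/3)*V))
    exact h3.congr_deriv (by ring)
  have hcont : Continuous (fun x : ℝ => N/2 - (2/3)*V*(1-x^2)) := by fun_prop
  rw [intervalIntegral.integral_eq_sub_of_hasDerivAt key (hcont.intervalIntegrable _ _)]
  ring

theorem stmt11 (n : ℕ) (hn : 0 < n) (z : Fin n → ℂ) (hz : ∀ k, ‖z k‖ = 1) :
    (ENNReal.ofReal (1 / 192) <
      ∫⁻ x in Icc (-1 : ℝ) 1,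
        ENNReal.ofReal ‖(x : ℂ) * ∑ k, 1 / ((x : ℂ) - z k)‖) ∧
    ENNReal.ofReal (1 / 192) <
      ∫⁻ x in Icc (-1 : ℝ) 1,
        ENNReal.ofReal ‖∑ k, 1 / ((x : ℂ) - z k)‖ := by
  have hN : (1:ℝ) ≤ (n:ℝ) := by exact_mod_cast hn
  have hN0 : (0:ℝ) < (n:ℝ) := by linarith
  set N : ℝ := (n:ℝ) with hNdef
  set q : Fin n → ℝ := fun k => Complex.normSq (1 - z k) with hqdef
  have hq0 : ∀ k, 0 ≤ q k := fun k => Complex.normSq_nonneg _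
  have hmq : ∀ (x:ℝ) (k : Fin n), Complex.normSq ((x:ℂ) - z k) = (1-x)^2 + x * q k :=
    fun x k => normSq_sub_eq x (z k) (hz k)
  have hre : ∀ k, (z k).re = 1 - q k / 2 := by
    intro k
    have := normSq_one_sub_eq (z k) (hz k)
    have hqk : q k = 2 - 2*(z k).re := this
    linarith
  -- the summed real part identity
  have hRE : ∀ (x:ℝ), (∀ k, (1-x)^2 + x * q k ≠ 0) →
      ((x:ℂ) * ∑ k, 1 / ((x:ℂ) - z k)).re
        = ∑ k, (1/2 - (1 - x^2)/(2*((1-x)^2 + x * q k))) := by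
    intro x hm
    rw [re_sum_eq]
    refine Finset.sum_congr rfl fun k _ => ?_
    rw [hmq x k, hre k]
    exact term_eq x (q k) _ (hm k) rfl
  -- abs bounds
  have habs₁ : ∀ (x:ℝ), ((x:ℂ) * ∑ k, 1 / ((x:ℂ) - z k)).re
      ≤ ‖(x:ℂ) * ∑ k, 1 / ((x:ℂ) - z k)‖ := fun x => Complex.re_le_norm _
  have habs₂ : ∀ (x:ℝ), -(((x:ℂ) * ∑ k, 1 / ((x:ℂ) - z k)).re)
      ≤ ‖(x:ℂ) * ∑ k, 1 / ((x:ℂ) - z k)‖ := by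
    intro x
    have h := Complex.abs_re_le_norm ((x:ℂ) * ∑ k, 1 / ((x:ℂ) - z k))
    have := neg_abs_le (((x:ℂ) * ∑ k, 1 / ((x:ℂ) - z k)).re)
    linarith [abs_nonneg (((x:ℂ) * ∑ k, 1 / ((x:ℂ) - z k)).re), le_abs_self (((x:ℂ) * ∑ k, 1 / ((x:ℂ) - z k)).re)]
  have main : ENNReal.ofReal (1 / 192) <
      ∫⁻ x in Icc (-1 : ℝ) 1,
        ENNReal.ofReal ‖(x : ℂ) * ∑ k, 1 / ((x : ℂ) - z k)‖ := by
    by_cases hA : ∃ j, q j ≤ 1/(16*N^2)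
    · -- Case A : some zero very close to 1
      obtain ⟨j, hj⟩ := hA
      have h2N : 1/(2*N) ≤ 1/2 := by
        apply one_div_le_one_div_of_le (by norm_num)
        linarith
      have h42 : 1/(4*N) ≤ 1/(2*N) := by
        apply one_div_le_one_div_of_le (by positivity)
        linarith
      have h4N0 : (0:ℝ) < 1/(4*N) := by positivity
      refine key_lower _ (fun x => (3/8)*(1-x)⁻¹ - N/2) (1 - 1/(2*N)) (1 - 1/(4*N))
        (by linarith) ?_ ?_ ?_ ?_ ?_
      · intro x hx
        constructor
        · linarith [hx.1]
        · linarith [hx.2]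
      · refine ContinuousOn.sub ?_ continuousOn_const
        refine continuousOn_const.mul (ContinuousOn.inv₀ (by fun_prop) ?_)
        intro x hx
        have : x ≤ 1 - 1/(4*N) := hx.2
        have : 0 < 1 - x := by linarith
        exact ne_of_gt this
      · intro x hx
        have ht2 : 1 - x ≤ 1/(2*N) := by linarith [hx.1]
        have hxpos : (0:ℝ) < 1 - x := by linarith [hx.2]
        have hinv : 2*N ≤ (1-x)⁻¹ := by
          rw [show (2*N) = (1/(2*N))⁻¹ by rw [one_div, inv_inv], ← one_div, ← one_div]
          exact one_div_le_one_div_of_le hxpos ht2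
        nlinarith
      · -- pointwise
        intro x hx
        have ht1 : 1/(4*N) ≤ 1 - x := by linarith [hx.2]
        have ht2 : 1 - x ≤ 1/(2*N) := by linarith [hx.1]
        have hxpos : (0:ℝ) < 1 - x := by linarith
        have hhalf : (1:ℝ)/2 ≤ x := by linarith [hx.1]
        have hx1' : x ≤ 1 := by linarith
        have hm : ∀ k, 0 < (1-x)^2 + x * q k := fun k =>
          add_pos_of_pos_of_nonneg (by positivity) (mul_nonneg (by linarith) (hq0 k))
        have hREx := hRE x (fun k => ne_of_gt (hm k))
        have hothers : ∑ k ∈ Finset.univ.erase j,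
            (1/2 - (1 - x^2)/(2*((1-x)^2 + x * q k))) ≤ (N-1)/2 := by
          calc ∑ k ∈ Finset.univ.erase j, (1/2 - (1 - x^2)/(2*((1-x)^2 + x * q k)))
              ≤ ∑ _k ∈ Finset.univ.erase j, (1/2:ℝ) := by
                refine Finset.sum_le_sum fun k _ => ?_
                have h2m : (0:ℝ) < 2*((1-x)^2 + x*q k) := by linarith [hm k]
                have hnum : (0:ℝ) ≤ 1 - x^2 := by nlinarith
                have : 0 ≤ (1 - x^2)/(2*((1-x)^2 + x * q k)) := div_nonneg hnum h2m.le
                linarith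
            _ = (N-1)/2 := by
                rw [Finset.sum_const, Finset.card_erase_of_mem (Finset.mem_univ j),
                  Finset.card_univ, Fintype.card_fin, nsmul_eq_mul, Nat.cast_sub hn]
                push_cast
                ring
        have hjterm : 1/2 - (1 - x^2)/(2*((1-x)^2 + x * q j))
            ≤ 1/2 - (3/8)*(1-x)⁻¹ := by
          have hqj : q j ≤ (1-x)^2 := by
            have h1 : (1/(4*N))^2 ≤ (1-x)^2 := by nlinarith
            have h2 : (1/(4*N))^2 = 1/(16*N^2) := by
              field_simp
              ring
            linarith [hj]
          have hmj : (1-x)^2 + x*q j ≤ 2*(1-x)^2 := by nlinarith [hq0 j]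
          have h32 : (3/2)*(1-x) ≤ 1 - x^2 := by nlinarith
          have key : (3/8)*(1-x)⁻¹ ≤ (1 - x^2)/(2*((1-x)^2 + x * q j)) := by
            rw [← div_eq_mul_inv, div_le_div_iff₀ hxpos (by linarith [hm j])]
            have e3 : (3/2)*(1-x)*(1-x) ≤ (1-x^2)*(1-x) :=
              mul_le_mul_of_nonneg_right h32 hxpos.le
            nlinarith [e3, hmj]
          linarith
        have hsum : ((x:ℂ) * ∑ k, 1 / ((x:ℂ) - z k)).re ≤ N/2 - (3/8)*(1-x)⁻¹ := by
          rw [hREx, ← Finset.add_sum_erase Finset.univ _ (Finset.mem_univ j)]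
          linarith
        have := habs₂ x
        linarith
      · rw [intA N hN]
        have := Real.log_two_gt_d9
        nlinarith
    · push_neg at hA
      by_cases hB : 18*N^2 ≤ ∑ k, (q k)⁻¹
      · -- Case B : much closeness mass near 1
        have h4N : 1/(4*N) ≤ 1/4 := by
          apply one_div_le_one_div_of_le (by positivity)
          linarith
        have h84 : 1/(8*N) ≤ 1/(4*N) := by
          apply one_div_le_one_div_of_le (by positivity)
          linarith
        have h8N0 : (0:ℝ) < 1/(8*N) := by positivity
        refine key_lower _ (fun _ => (31/64)*N) (1 - 1/(4*N)) (1 - 1/(8*N))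
          (by linarith) ?_ continuousOn_const (fun x _ => by positivity) ?_ ?_
        · intro x hx
          constructor
          · linarith [hx.1]
          · linarith [hx.2]
        · -- pointwise
          intro x hx
          have ht1 : 1/(8*N) ≤ 1 - x := by linarith [hx.2]
          have ht2 : 1 - x ≤ 1/(4*N) := by linarith [hx.1]
          have hxpos : (0:ℝ) < 1 - x := by linarith
          have h34 : (3:ℝ)/4 ≤ x := by linarith [hx.1]
          have hx1' : x ≤ 1 := by linarith
          have hm : ∀ k, 0 < (1-x)^2 + x * q k := fun k =>
            add_pos_of_pos_of_nonneg (by positivity) (mul_nonneg (by linarith) (hq0 k))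
          have hREx := hRE x (fun k => ne_of_gt (hm k))
          have hterm : ∀ k, (1/2 - (1 - x^2)/(2*((1-x)^2 + x * q k)))
              ≤ 1/2 - (7/16)*(1-x) * (q k)⁻¹ := by
            intro k
            have hqk : 1/(16*N^2) < q k := hA k
            have hqkpos : 0 < q k := lt_of_lt_of_le (by positivity) hqk.le
            have h1x2 : (1-x)^2 ≤ q k := by
              have : (1-x)^2 ≤ (1/(4*N))^2 := by nlinarith
              have h2 : (1/(4*N))^2 = 1/(16*N^2) := by field_simp; ring
              linarith
            have hmle : (1-x)^2 + x*q k ≤ 2*(q k) := by nlinarith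
            have h74 : (7/4)*(1-x) ≤ 1 - x^2 := by nlinarith
            have key : (7/16)*(1-x) * (q k)⁻¹ ≤ (1 - x^2)/(2*((1-x)^2 + x * q k)) := by
              rw [← div_eq_mul_inv, div_le_div_iff₀ hqkpos (by linarith [hm k])]
              have e3 : (7/4)*(1-x)*(q k) ≤ (1-x^2)*(q k) :=
                mul_le_mul_of_nonneg_right h74 hqkpos.le
              nlinarith [e3, hmle]
            linarith
          have hsum : ((x:ℂ) * ∑ k, 1 / ((x:ℂ) - z k)).re
              ≤ N/2 - (7/16)*(1-x) * (∑ k, (q k)⁻¹) := by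
            rw [hREx]
            calc ∑ k, (1/2 - (1 - x^2)/(2*((1-x)^2 + x * q k)))
                ≤ ∑ k, (1/2 - (7/16)*(1-x) * (q k)⁻¹) :=
                  Finset.sum_le_sum fun k _ => hterm k
              _ = N/2 - (7/16)*(1-x) * (∑ k, (q k)⁻¹) := by
                  rw [Finset.sum_sub_distrib, Finset.sum_const, Finset.card_univ,
                    Fintype.card_fin, nsmul_eq_mul, ← Finset.mul_sum]
                  ring
          have hprod : (1/(8*N))*(18*N^2) ≤ (1-x)*(∑ k, (q k)⁻¹) := by
            refine mul_le_mul ht1 hB (by positivity) (by linarith)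
          have hval : (1/(8*N))*(18*N^2) = (9/4)*N := by
            field_simp
            ring
          have := habs₂ x
          nlinarith
        · rw [intervalIntegral.integral_const, smul_eq_mul]
          have e : ((1 - 1/(8*N)) - (1 - 1/(4*N))) * ((31/64)*N) = 31/512 := by
            field_simp
            ring
          rw [e]
          norm_num
      · -- Case C
        push_neg at hB
        set V : ℝ := ∑ k, (q k)⁻¹ with hVdef
        have hq' : ∀ k, 0 < q k := by
          intro k
          have h1 : 0 < 1/(16*N^2) := by positivity
          linarith [hA k]
        have hne : Nonempty (Fin n) := ⟨⟨0, hn⟩⟩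
        have hV0 : 0 < V := by
          apply Finset.sum_pos (fun k _ => inv_pos.2 (hq' k))
          exact Finset.univ_nonempty
        set T : ℝ := min (3*N/(8*V)) (1/4) with hTdef
        have hT0 : 0 < T := lt_min (by positivity) (by norm_num)
        have hT14 : T ≤ 1/4 := min_le_right _ _
        have hTV : T ≤ 3*N/(8*V) := min_le_left _ _
        have hVT : T*(8*V) ≤ 3*N := by
          rw [← le_div_iff₀ (by positivity)]
          exact hTV
        refine key_lower _ (fun x => N/2 - (2/3)*V*(1-x^2)) (1-T) 1 (by linarith) ?_ ?_ ?_ ?_ ?_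
        · intro x hx
          constructor
          · linarith [hx.1]
          · exact hx.2
        · exact (Continuous.continuousOn (by fun_prop))
        · -- nonnegativity of φ
          intro x hx
          have hx1 : 1 - T ≤ x := hx.1
          have hx2 : x ≤ 1 := hx.2
          have h34 : (3:ℝ)/4 ≤ x := by linarith
          have h1x2 : 1 - x^2 ≤ 2*T := by nlinarith
          have h1x0 : 0 ≤ 1 - x^2 := by nlinarith
          have : V*(1-x^2) ≤ V*(2*T) := mul_le_mul_of_nonneg_left h1x2 hV0.le
          nlinarith
        · -- pointwise
          intro x hx
          have hx1 : 1 - T ≤ x := hx.1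
          have hx2 : x ≤ 1 := hx.2
          have h34 : (3:ℝ)/4 ≤ x := by linarith
          have h1x0 : 0 ≤ 1 - x^2 := by nlinarith
          have hm : ∀ k, 0 < (1-x)^2 + x * q k := fun k =>
            add_pos_of_nonneg_of_pos (sq_nonneg _) (mul_pos (by linarith) (hq' k))
          have hREx := hRE x (fun k => ne_of_gt (hm k))
          have hterm : ∀ k, (1/2 - (2/3)*(1-x^2) * (q k)⁻¹)
              ≤ 1/2 - (1 - x^2)/(2*((1-x)^2 + x * q k)) := by
            intro k
            have hqk := hq' k
            have h3q4m : 3*(q k) ≤ 4*((1-x)^2 + x * q k) := by nlinarith [sq_nonneg (1-x)]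
            have key : (1 - x^2)/(2*((1-x)^2 + x * q k)) ≤ (2/3)*(1-x^2) * (q k)⁻¹ := by
              rw [show (2:ℝ)/3*(1-x^2)*(q k)⁻¹ = (2/3*(1-x^2))/(q k) from by ring,
                div_le_div_iff₀ (by linarith [hm k]) hqk]
              nlinarith [mul_le_mul_of_nonneg_left h3q4m h1x0]
            linarith
          have hsum : N/2 - (2/3)*V*(1-x^2) ≤ ((x:ℂ) * ∑ k, 1 / ((x:ℂ) - z k)).re := by
            rw [hREx]
            calc N/2 - (2/3)*V*(1-x^2)
                = ∑ k, (1/2 - (2/3)*(1-x^2) * (q k)⁻¹) := by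
                  rw [Finset.sum_sub_distrib, Finset.sum_const, Finset.card_univ,
                    Fintype.card_fin, nsmul_eq_mul, ← Finset.mul_sum, hVdef]
                  ring
              _ ≤ ∑ k, (1/2 - (1 - x^2)/(2*((1-x)^2 + x * q k))) :=
                  Finset.sum_le_sum fun k _ => hterm k
          have := habs₁ x
          linarith
        · rw [intC N V T]
          rcases le_or_gt (3*N/(8*V)) (1/4) with hc | hc
          · have hTeq : T = 3*N/(8*V) := min_eq_left hc
            have hVTe : V*T = 3*N/8 := by
              rw [hTeq]
              field_simp
            rw [show N*T/2 - (2/3)*V*(T^2 - T^3/3)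
                = N*T/2 - (2/3)*(V*T)*T + (2/9)*(V*T)*T^2 from by ring, hVTe]
            have hgt : 1/192 < N*T/4 := by
              have hTe2 : N*T/4 = 3*N^2/(32*V) := by
                rw [hTeq]
                field_simp
                ring
              rw [hTe2, lt_div_iff₀ (by positivity)]
              nlinarith
            nlinarith [sq_nonneg T, hT0, hN0]
          · have hTeq : T = 1/4 := min_eq_right hc.le
            have hVlt : V < 3*N/2 := by
              rw [lt_div_iff₀ (by positivity)] at hc
              linarith
            rw [hTeq]
            nlinarith
  refine ⟨main, lt_of_lt_of_le main ?_⟩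
  refine lintegral_mono_ae ((ae_restrict_iff' measurableSet_Icc).2 (ae_of_all _ ?_))
  intro x hx
  refine ENNReal.ofReal_le_ofReal ?_
  rw [norm_mul]
  have h1 : ‖(x:ℂ)‖ ≤ 1 := by
    rw [Complex.norm_real, Real.norm_eq_abs]
    exact abs_le.2 ⟨hx.1, hx.2⟩
  exact mul_le_of_le_one_left (norm_nonneg _) h1
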